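/- Let Q be a ccc preorder and let P be a preorder in which every increasing ω-sequence r₀ ≤ r₁ ≤ r₂ ≤ ⋯ has an upper bound. Suppose R : Q → P → Prop satisfies: (i) if q ≤ q' and R(q,r) then R(q',r); (ii) if R(q,r) and r ≤ r' then R(q,r'); (iii) if every q' ≥ q has an extension q'' ≥ q' with R(q'',r), then R(q,r); (iv) for every q ∈ Q and r ∈ P there exist q' ≥ q and r' ≥ r with R(q',r'). Then for every r ∈ P there exists r' ∈ P with r ≤ r' such that R(q,r') holds for every q ∈ Q. -/

import Mathlib

private lemma chainBound {P : Type*} [Preorder P]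
    (hP : ∀ f : ℕ → P, (∀ n, f n ≤ f (n + 1)) → ∃ b, ∀ n, f n ≤ b)
    (T : Set P) (hc : T.Countable) (hne : T.Nonempty)
    (hch : ∀ x ∈ T, ∀ y ∈ T, x ≤ y ∨ y ≤ x) : ∃ b, ∀ x ∈ T, x ≤ b := by
  classical
  obtain ⟨f, hf⟩ := hc.exists_eq_range hne
  subst hf
  set g : ℕ → P := fun n => Nat.rec (f 0) (fun n gn => if f (n+1) ≤ gn then gn else f (n+1)) n
    with hg
  have hmem : ∀ n, g n ∈ Set.range f := by
    intro n
    induction n with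
    | zero => exact ⟨0, rfl⟩
    | succ n ih =>
      by_cases h : f (n+1) ≤ g n
      · simp only [hg] at h ⊢; simp [h]; exact ih
      · simp only [hg] at h ⊢; simp [h]
  have hmono : ∀ n, g n ≤ g (n+1) := by
    intro n
    by_cases h : f (n+1) ≤ g n
    · simp only [hg] at h ⊢; simp [h]
    · have := hch _ ⟨n+1, rfl⟩ _ (hmem n)
      rcases this with h' | h'
      · exact absurd h' h
      · simp only [hg] at h h' ⊢; simpa [h] using h'
  have hle : ∀ n, f n ≤ g n := by
    intro n
    cases n with
    | zero => exact le_refl _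
    | succ n =>
      by_cases h : f (n+1) ≤ g n
      · simp only [hg] at h ⊢; simp [h]
      · simp only [hg] at h ⊢; simp [h]
  obtain ⟨b, hb⟩ := hP g hmono
  exact ⟨b, by rintro x ⟨n, rfl⟩; exact (hle n).trans (hb n)⟩

theorem stmt0 {Q P : Type*} [Preorder Q] [Preorder P]
    (hccc : ∀ S : Set Q,
      (∀ x ∈ S, ∀ y ∈ S, x ≠ y → ¬∃ z, x ≤ z ∧ y ≤ z) → S.Countable)
    (hP : ∀ f : ℕ → P, (∀ n, f n ≤ f (n + 1)) → ∃ b, ∀ n, f n ≤ b)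
    (R : Q → P → Prop)
    (h1 : ∀ q q' r, q ≤ q' → R q r → R q' r)
    (h2 : ∀ q r r', R q r → r ≤ r' → R q r')
    (h3 : ∀ q r, (∀ q', q ≤ q' → ∃ q'', q' ≤ q'' ∧ R q'' r) → R q r)
    (h4 : ∀ q r, ∃ q' r', q ≤ q' ∧ r ≤ r' ∧ R q' r') :
    ∀ r : P, ∃ r' : P, r ≤ r' ∧ ∀ q : Q, R q r' := by
  classical
  intro r
  -- valid approximation sets
  set V : Set (Set (Q × P)) := {S |
    (∀ p ∈ S, R p.1 p.2 ∧ r ≤ p.2) ∧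
    (∀ p ∈ S, ∀ p' ∈ S, p.1 = p'.1 → p = p') ∧
    (∀ p ∈ S, ∀ p' ∈ S, p.1 ≠ p'.1 → ¬∃ z, p.1 ≤ z ∧ p'.1 ≤ z) ∧
    (∀ p ∈ S, ∀ p' ∈ S, p.2 ≤ p'.2 ∨ p'.2 ≤ p.2)} with hV
  have hzorn : ∃ M, Maximal (· ∈ V) M := by
    apply zorn_subset
    intro c hc hchain
    refine ⟨⋃₀ c, ?_, fun s hs => Set.subset_sUnion_of_mem hs⟩
    have key : ∀ p ∈ ⋃₀ c, ∀ p' ∈ ⋃₀ c, ∃ s ∈ c, p ∈ s ∧ p' ∈ s := by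
      rintro p ⟨s, hs, hps⟩ p' ⟨s', hs', hps'⟩
      rcases hchain.total hs hs' with h | h
      · exact ⟨s', hs', h hps, hps'⟩
      · exact ⟨s, hs, hps, h hps'⟩
    refine ⟨?_, ?_, ?_, ?_⟩
    · rintro p ⟨s, hs, hps⟩; exact (hc hs).1 p hps
    · intro p hp p' hp' h
      obtain ⟨s, hs, h1, h2⟩ := key p hp p' hp'
      exact (hc hs).2.1 p h1 p' h2 h
    · intro p hp p' hp' h
      obtain ⟨s, hs, h1, h2⟩ := key p hp p' hp'
      exact (hc hs).2.2.1 p h1 p' h2 h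
    · intro p hp p' hp'
      obtain ⟨s, hs, h1, h2⟩ := key p hp p' hp'
      exact (hc hs).2.2.2 p h1 p' h2
  obtain ⟨M, hM⟩ := hzorn
  have hMV : M ∈ V := hM.prop
  obtain ⟨hMr, hMfun, hManti, hMch⟩ := hMV
  -- the antichain of first coordinates is countable
  have hAcount : (Prod.fst '' M).Countable := by
    apply hccc
    rintro x ⟨p, hp, rfl⟩ y ⟨p', hp', rfl⟩ hxy
    exact hManti p hp p' hp' hxy
  have hMcount : M.Countable := by
    refine Set.MapsTo.countable_of_injOn (Set.mapsTo_image Prod.fst M) ?_ hAcount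
    intro p hp p' hp' h
    exact hMfun p hp p' hp' h
  -- bound the chain of second coordinates together with r
  have hTcount : (insert r (Prod.snd '' M)).Countable :=
    (hMcount.image Prod.snd).insert r
  have hTch : ∀ x ∈ insert r (Prod.snd '' M), ∀ y ∈ insert r (Prod.snd '' M),
      x ≤ y ∨ y ≤ x := by
    rintro x hx y hy
    rcases hx with rfl | ⟨p, hp, rfl⟩
    · rcases hy with rfl | ⟨p', hp', rfl⟩
      · exact Or.inl le_rfl
      · exact Or.inl (hMr p' hp').2
    · rcases hy with rfl | ⟨p', hp', rfl⟩
      · exact Or.inr (hMr p hp).2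
      · exact hMch p hp p' hp'
  obtain ⟨b, hb⟩ := chainBound hP _ hTcount ⟨r, Set.mem_insert r _⟩ hTch
  have hrb : r ≤ b := hb r (Set.mem_insert r _)
  have hbM : ∀ p ∈ M, p.2 ≤ b := fun p hp => hb _ (Set.mem_insert_of_mem _ ⟨p, hp, rfl⟩)
  -- maximality: every q is compatible with some first coordinate of M
  have hmax : ∀ q : Q, ∃ p ∈ M, ∃ z, q ≤ z ∧ p.1 ≤ z := by
    intro q
    by_contra hcon
    push_neg at hcon
    obtain ⟨q', ρ', hqq', hbρ', hR⟩ := h4 q b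
    have hfresh : ∀ p ∈ M, ¬∃ z, q' ≤ z ∧ p.1 ≤ z := by
      rintro p hp ⟨z, hz1, hz2⟩
      exact hcon p hp z (hqq'.trans hz1) hz2
    have hne : ∀ p ∈ M, p ≠ (q', ρ') := by
      intro p hp h
      exact hfresh p hp ⟨q', le_rfl, by rw [h]⟩
    have hnotmem : (q', ρ') ∉ M := fun h => hne _ h rfl
    have hins : insert (q', ρ') M ∈ V := by
      refine ⟨?_, ?_, ?_, ?_⟩
      · rintro p (rfl | hp)
        · exact ⟨hR, hrb.trans hbρ'⟩
        · exact hMr p hp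
      · rintro p (rfl | hp) p' (rfl | hp') h
        · rfl
        · exact absurd ⟨q', le_rfl, h.ge⟩ (hfresh p' hp')
        · exact absurd ⟨q', le_rfl, h.le⟩ (hfresh p hp)
        · exact hMfun p hp p' hp' h
      · rintro p (rfl | hp) p' (rfl | hp') h
        · exact absurd rfl h
        · exact fun ⟨z, hz1, hz2⟩ => hfresh p' hp' ⟨z, hz1, hz2⟩
        · exact fun ⟨z, hz1, hz2⟩ => hfresh p hp ⟨z, hz2, hz1⟩
        · exact hManti p hp p' hp' h
      · rintro p (rfl | hp) p' (rfl | hp')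
        · exact Or.inl le_rfl
        · exact Or.inr ((hbM p' hp').trans hbρ')
        · exact Or.inl ((hbM p hp).trans hbρ')
        · exact hMch p hp p' hp'
    have := hM.eq_of_subset hins (Set.subset_insert _ _)
    exact hnotmem (this ▸ Set.mem_insert _ _)
  refine ⟨b, hrb, ?_⟩
  intro q
  apply h3
  intro q'' hqq''
  obtain ⟨p, hp, z, hz1, hz2⟩ := hmax q''
  exact ⟨z, hz1, h1 p.1 z b hz2 (h2 p.1 p.2 b (hMr p hp).1 (hbM p hp))⟩
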